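/- For the bi-objective problem ORZR with f1 = OneRoyalRoad and f2 = ZeroRoyalRoad on bit-strings of length n = b·ℓ with b > 1 and block length ℓ ≤ 3, there are no non-global Pareto local optima: every bit-string that is not Pareto optimal is dominated by some bit-string at Hamming distance exactly 1 from it. -/
import Mathlib


open Finset

/-- Number of one-bits of a bit-string. -/
def onesCount {n : ℕ} (x : Fin n → Bool) : ℕ :=
  (Finset.univ.filter fun i => x i = true).card

/-- Number of zero-bits of a bit-string. -/
def zerosCount {n : ℕ} (x : Fin n → Bool) : ℕ :=
  (Finset.univ.filter fun i => x i = false).card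

/-- Number of leading one-bits. -/
def leadingOnes {n : ℕ} (x : Fin n → Bool) : ℕ :=
  (Finset.univ.filter fun i : Fin n => ∀ j : Fin n, j ≤ i → x j = true).card

/-- Number of trailing zero-bits. -/
def trailingZeroes {n : ℕ} (x : Fin n → Bool) : ℕ :=
  (Finset.univ.filter fun i : Fin n => ∀ j : Fin n, i ≤ j → x j = false).card

/-- `y` dominates `x` for the bi-objective maximisation problem `(f1, f2)`. -/
def dominates {n : ℕ} (f1 f2 : (Fin n → Bool) → ℕ) (y x : Fin n → Bool) : Prop :=
  f1 x ≤ f1 y ∧ f2 x ≤ f2 y ∧ (f1 x < f1 y ∨ f2 x < f2 y)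

/-- `x` is Pareto optimal: no solution dominates it. -/
def paretoOptimal {n : ℕ} (f1 f2 : (Fin n → Bool) → ℕ) (x : Fin n → Bool) : Prop :=
  ∀ y, ¬ dominates f1 f2 y x

/-- `x` is a non-global Pareto local optimum: not Pareto optimal, and not dominated by
any bit-string at Hamming distance exactly 1. -/
def nonGlobalParetoLocalOpt {n : ℕ} (f1 f2 : (Fin n → Bool) → ℕ) (x : Fin n → Bool) : Prop :=
  ¬ paretoOptimal f1 f2 x ∧ ∀ y, hammingDist y x = 1 → ¬ dominates f1 f2 y x

/-- The ZeroJump function with jump parameter `k`. -/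
def zeroJump (n k : ℕ) (x : Fin n → Bool) : ℕ :=
  if zerosCount x ≤ n - k ∨ x = (fun _ => false) then k + zerosCount x else n - zerosCount x

/-- The OneJump function with jump parameter `k`. -/
def oneJump (n k : ℕ) (x : Fin n → Bool) : ℕ :=
  if onesCount x ≤ n - k ∨ x = (fun _ => true) then k + onesCount x else n - onesCount x

/-- Block `j` (0-indexed) of the bit-string `x` (with `b` blocks of length `ℓ`) is all-ones. -/
def blockAllOnes (b ℓ : ℕ) (x : Fin (b * ℓ) → Bool) (j : Fin b) : Prop :=
  ∀ i : Fin (b * ℓ), (i : ℕ) / ℓ = (j : ℕ) → x i = true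

/-- Block `j` (0-indexed) of the bit-string `x` is all-zeros. -/
def blockAllZeros (b ℓ : ℕ) (x : Fin (b * ℓ) → Bool) (j : Fin b) : Prop :=
  ∀ i : Fin (b * ℓ), (i : ℕ) / ℓ = (j : ℕ) → x i = false

instance (b ℓ : ℕ) (x : Fin (b * ℓ) → Bool) (j : Fin b) : Decidable (blockAllOnes b ℓ x j) := by
  unfold blockAllOnes; infer_instance

instance (b ℓ : ℕ) (x : Fin (b * ℓ) → Bool) (j : Fin b) : Decidable (blockAllZeros b ℓ x j) := by
  unfold blockAllZeros; infer_instance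

/-- OneRoyalRoad: `ℓ` times the number of all-ones blocks. -/
def oneRoyalRoad (b ℓ : ℕ) (x : Fin (b * ℓ) → Bool) : ℕ :=
  ℓ * (Finset.univ.filter fun j : Fin b => blockAllOnes b ℓ x j).card

/-- ZeroRoyalRoad: `ℓ` times the number of all-zeros blocks. -/
def zeroRoyalRoad (b ℓ : ℕ) (x : Fin (b * ℓ) → Bool) : ℕ :=
  ℓ * (Finset.univ.filter fun j : Fin b => blockAllZeros b ℓ x j).card

/-- Number of one-bits in block `j` of `x`. -/
def blockOnes (b ℓ : ℕ) (x : Fin (b * ℓ) → Bool) (j : Fin b) : ℕ :=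
  (Finset.univ.filter fun i : Fin (b * ℓ) => (i : ℕ) / ℓ = (j : ℕ) ∧ x i = true).card

/-- Number of zero-bits in block `j` of `x`. -/
def blockZeros (b ℓ : ℕ) (x : Fin (b * ℓ) → Bool) (j : Fin b) : ℕ :=
  (Finset.univ.filter fun i : Fin (b * ℓ) => (i : ℕ) / ℓ = (j : ℕ) ∧ x i = false).card

/-- For ORZR with b > 1 and block length ℓ ≤ 3, there are no non-global Pareto
local optima: every non-Pareto-optimal bit-string is dominated by some bit-string at Hamming
distance exactly 1 from it. -/
lemma block_mem_exists (b ℓ : ℕ) (hℓ : 1 ≤ ℓ) (j : Fin b) :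
    ∃ i : Fin (b * ℓ), (i : ℕ) / ℓ = (j : ℕ) := by
  refine ⟨⟨(j : ℕ) * ℓ, ?_⟩, ?_⟩
  · exact (Nat.mul_lt_mul_right (by omega : 0 < ℓ)).mpr j.2
  · exact Nat.mul_div_cancel _ (by omega)

lemma hd_update {n : ℕ} (x : Fin n → Bool) (i0 : Fin n) (v : Bool) (h : v ≠ x i0) :
    hammingDist (Function.update x i0 v) x = 1 := by
  have : (univ.filter fun i => Function.update x i0 v i ≠ x i) = {i0} := by
    ext i
    simp only [mem_filter, mem_univ, true_and, mem_singleton]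
    constructor
    · intro h'; by_contra hi; exact h' (by rw [Function.update_of_ne hi])
    · rintro rfl; simpa using h
  simp [hammingDist, this]

lemma sum_le (b ℓ : ℕ) (hℓ : 1 ≤ ℓ) (z : Fin (b * ℓ) → Bool) :
    oneRoyalRoad b ℓ z + zeroRoyalRoad b ℓ z ≤ ℓ * b := by
  have hdisj : Disjoint (univ.filter fun j : Fin b => blockAllOnes b ℓ z j)
      (univ.filter fun j : Fin b => blockAllZeros b ℓ z j) := by
    rw [Finset.disjoint_left]
    intro j hj1 hj0
    simp only [mem_filter, mem_univ, true_and] at hj1 hj0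
    obtain ⟨i, hi⟩ := block_mem_exists b ℓ hℓ j
    have h1 := hj1 i hi
    have h0 := hj0 i hi
    simp [h1] at h0
  have := Finset.card_union_of_disjoint hdisj
  have hle : ((univ.filter fun j : Fin b => blockAllOnes b ℓ z j) ∪
      (univ.filter fun j : Fin b => blockAllZeros b ℓ z j)).card ≤ b := by
    calc _ ≤ (univ : Finset (Fin b)).card := Finset.card_le_card (by intro a _; exact mem_univ a)
    _ = b := by simp
  rw [oneRoyalRoad, zeroRoyalRoad, ← Nat.mul_add]
  exact Nat.mul_le_mul_left ℓ (by omega)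

lemma flipA (b ℓ : ℕ) (hℓ : 1 ≤ ℓ) (x : Fin (b * ℓ) → Bool) (j : Fin b) (i0 : Fin (b * ℓ))
    (hi0j : (i0 : ℕ) / ℓ = (j : ℕ)) (hx0 : x i0 = false)
    (huniq : ∀ i : Fin (b * ℓ), (i : ℕ) / ℓ = (j : ℕ) → x i = false → i = i0)
    (i1 : Fin (b * ℓ)) (hi1j : (i1 : ℕ) / ℓ = (j : ℕ)) (hx1 : x i1 = true) :
    dominates (oneRoyalRoad b ℓ) (zeroRoyalRoad b ℓ) (Function.update x i0 true) x := by
  set y := Function.update x i0 true with hy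
  have hsub1 : (univ.filter fun j' : Fin b => blockAllOnes b ℓ x j') ⊆
      (univ.filter fun j' : Fin b => blockAllOnes b ℓ y j') := by
    intro j' hj'
    simp only [mem_filter, mem_univ, true_and] at hj' ⊢
    intro i hij
    by_cases hi : i = i0
    · simp [hy, hi]
    · rw [hy, Function.update_of_ne hi]; exact hj' i hij
  have hyj : blockAllOnes b ℓ y j := by
    intro i hij
    by_cases hi : i = i0
    · simp [hy, hi]
    · rw [hy, Function.update_of_ne hi]
      cases hxi : x i with
      | false => exact absurd (huniq i hij hxi) hi
      | true => rfl
  have hxj : ¬ blockAllOnes b ℓ x j := fun h => by simp [h i0 hi0j] at hx0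
  have hss : (univ.filter fun j' : Fin b => blockAllOnes b ℓ x j') ⊂
      (univ.filter fun j' : Fin b => blockAllOnes b ℓ y j') := by
    refine ⟨hsub1, fun hsub => ?_⟩
    have := hsub (mem_filter.mpr ⟨mem_univ j, hyj⟩)
    simp only [mem_filter, mem_univ, true_and] at this
    exact hxj this
  have hc1 : (univ.filter fun j' : Fin b => blockAllOnes b ℓ x j').card <
      (univ.filter fun j' : Fin b => blockAllOnes b ℓ y j').card := Finset.card_lt_card hss
  have hf1 : oneRoyalRoad b ℓ x < oneRoyalRoad b ℓ y := by
    rw [oneRoyalRoad, oneRoyalRoad]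
    exact (Nat.mul_lt_mul_left (by omega : 0 < ℓ)).mpr hc1
  have hsub0 : (univ.filter fun j' : Fin b => blockAllZeros b ℓ x j') ⊆
      (univ.filter fun j' : Fin b => blockAllZeros b ℓ y j') := by
    intro j' hj'
    simp only [mem_filter, mem_univ, true_and] at hj' ⊢
    intro i hij
    by_cases hi : i = i0
    · exfalso
      have hjj' : (j : ℕ) = (j' : ℕ) := by rw [← hi0j, ← hij, hi]
      have := hj' i1 (by rw [hi1j, hjj'])
      simp [hx1] at this
    · rw [hy, Function.update_of_ne hi]; exact hj' i hij
  have hf2 : zeroRoyalRoad b ℓ x ≤ zeroRoyalRoad b ℓ y :=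
    Nat.mul_le_mul_left ℓ (Finset.card_le_card hsub0)
  exact ⟨le_of_lt hf1, hf2, Or.inl hf1⟩

lemma flipB (b ℓ : ℕ) (hℓ : 1 ≤ ℓ) (x : Fin (b * ℓ) → Bool) (j : Fin b) (i0 : Fin (b * ℓ))
    (hi0j : (i0 : ℕ) / ℓ = (j : ℕ)) (hx0 : x i0 = true)
    (huniq : ∀ i : Fin (b * ℓ), (i : ℕ) / ℓ = (j : ℕ) → x i = true → i = i0)
    (i1 : Fin (b * ℓ)) (hi1j : (i1 : ℕ) / ℓ = (j : ℕ)) (hx1 : x i1 = false) :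
    dominates (oneRoyalRoad b ℓ) (zeroRoyalRoad b ℓ) (Function.update x i0 false) x := by
  set y := Function.update x i0 false with hy
  have hsub0 : (univ.filter fun j' : Fin b => blockAllZeros b ℓ x j') ⊆
      (univ.filter fun j' : Fin b => blockAllZeros b ℓ y j') := by
    intro j' hj'
    simp only [mem_filter, mem_univ, true_and] at hj' ⊢
    intro i hij
    by_cases hi : i = i0
    · simp [hy, hi]
    · rw [hy, Function.update_of_ne hi]; exact hj' i hij
  have hyj : blockAllZeros b ℓ y j := by
    intro i hij
    by_cases hi : i = i0
    · simp [hy, hi]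
    · rw [hy, Function.update_of_ne hi]
      cases hxi : x i with
      | true => exact absurd (huniq i hij hxi) hi
      | false => rfl
  have hxj : ¬ blockAllZeros b ℓ x j := fun h => by simp [h i0 hi0j] at hx0
  have hss : (univ.filter fun j' : Fin b => blockAllZeros b ℓ x j') ⊂
      (univ.filter fun j' : Fin b => blockAllZeros b ℓ y j') := by
    refine ⟨hsub0, fun hsub => ?_⟩
    have := hsub (mem_filter.mpr ⟨mem_univ j, hyj⟩)
    simp only [mem_filter, mem_univ, true_and] at this
    exact hxj this
  have hc0 : (univ.filter fun j' : Fin b => blockAllZeros b ℓ x j').card <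
      (univ.filter fun j' : Fin b => blockAllZeros b ℓ y j').card := Finset.card_lt_card hss
  have hf2 : zeroRoyalRoad b ℓ x < zeroRoyalRoad b ℓ y := by
    rw [zeroRoyalRoad, zeroRoyalRoad]
    exact (Nat.mul_lt_mul_left (by omega : 0 < ℓ)).mpr hc0
  have hsub1 : (univ.filter fun j' : Fin b => blockAllOnes b ℓ x j') ⊆
      (univ.filter fun j' : Fin b => blockAllOnes b ℓ y j') := by
    intro j' hj'
    simp only [mem_filter, mem_univ, true_and] at hj' ⊢
    intro i hij
    by_cases hi : i = i0
    · exfalso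
      have hjj' : (j : ℕ) = (j' : ℕ) := by rw [← hi0j, ← hij, hi]
      have := hj' i1 (by rw [hi1j, hjj'])
      simp [hx1] at this
    · rw [hy, Function.update_of_ne hi]; exact hj' i hij
  have hf1 : oneRoyalRoad b ℓ x ≤ oneRoyalRoad b ℓ y :=
    Nat.mul_le_mul_left ℓ (Finset.card_le_card hsub1)
  exact ⟨hf1, le_of_lt hf2, Or.inr hf2⟩

lemma blocks_disjoint (b ℓ : ℕ) (hℓ : 1 ≤ ℓ) (z : Fin (b * ℓ) → Bool) :
    Disjoint (univ.filter fun j : Fin b => blockAllOnes b ℓ z j)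
      (univ.filter fun j : Fin b => blockAllZeros b ℓ z j) := by
  rw [Finset.disjoint_left]
  intro j hj1 hj0
  simp only [mem_filter, mem_univ, true_and] at hj1 hj0
  obtain ⟨i, hi⟩ := block_mem_exists b ℓ hℓ j
  have h1 := hj1 i hi
  have h0 := hj0 i hi
  simp [h1] at h0

lemma block_card_le (b ℓ : ℕ) (hℓ : 1 ≤ ℓ) (x : Fin (b * ℓ) → Bool) (j : Fin b) :
    (univ.filter fun i : Fin (b * ℓ) => (i : ℕ) / ℓ = (j : ℕ) ∧ x i = false).card +
      (univ.filter fun i : Fin (b * ℓ) => (i : ℕ) / ℓ = (j : ℕ) ∧ x i = true).card ≤ ℓ := by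
  have hdisj : Disjoint
      (univ.filter fun i : Fin (b * ℓ) => (i : ℕ) / ℓ = (j : ℕ) ∧ x i = false)
      (univ.filter fun i : Fin (b * ℓ) => (i : ℕ) / ℓ = (j : ℕ) ∧ x i = true) := by
    rw [Finset.disjoint_left]
    intro i hi1 hi2
    simp only [mem_filter, mem_univ, true_and] at hi1 hi2
    simp [hi1.2] at hi2
  rw [← Finset.card_union_of_disjoint hdisj]
  have hsub : ((univ.filter fun i : Fin (b * ℓ) => (i : ℕ) / ℓ = (j : ℕ) ∧ x i = false) ∪
      (univ.filter fun i : Fin (b * ℓ) => (i : ℕ) / ℓ = (j : ℕ) ∧ x i = true)) ⊆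
      (univ.filter fun i : Fin (b * ℓ) => (i : ℕ) / ℓ = (j : ℕ)) := by
    intro i hi
    simp only [mem_union, mem_filter, mem_univ, true_and] at hi ⊢
    rcases hi with h | h <;> exact h.1
  refine le_trans (Finset.card_le_card hsub) ?_
  have : (univ.filter fun i : Fin (b * ℓ) => (i : ℕ) / ℓ = (j : ℕ)).card ≤
      (Finset.range ℓ).card := by
    refine Finset.card_le_card_of_injOn (fun i => (i : ℕ) % ℓ) ?_ ?_
    · intro i _
      exact Finset.mem_range.mpr (Nat.mod_lt _ (by omega))
    · intro i1 h1 i2 h2 hmod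
      have hmod' : (i1 : ℕ) % ℓ = (i2 : ℕ) % ℓ := hmod
      simp only [mem_coe, mem_filter, mem_univ, true_and] at h1 h2
      have e1 := Nat.div_add_mod (i1 : ℕ) ℓ
      have e2 := Nat.div_add_mod (i2 : ℕ) ℓ
      apply Fin.ext
      rw [h1] at e1; rw [h2] at e2
      omega
  simpa using this


theorem ORZR_no_local_opts (b ℓ : ℕ) (hb : 1 < b) (hℓ1 : 1 ≤ ℓ) (hℓ3 : ℓ ≤ 3)
    (x : Fin (b * ℓ) → Bool)
    (hx : ¬ paretoOptimal (oneRoyalRoad b ℓ) (zeroRoyalRoad b ℓ) x) :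
    ∃ y, hammingDist y x = 1 ∧ dominates (oneRoyalRoad b ℓ) (zeroRoyalRoad b ℓ) y x := by
  have hmix : ∃ j : Fin b, ¬ blockAllOnes b ℓ x j ∧ ¬ blockAllZeros b ℓ x j := by
    by_contra h
    push_neg at h
    apply hx
    intro y hdom
    have huniv : ((univ.filter fun j : Fin b => blockAllOnes b ℓ x j) ∪
        (univ.filter fun j : Fin b => blockAllZeros b ℓ x j)) = univ := by
      apply Finset.eq_univ_of_forall
      intro j
      simp only [mem_union, mem_filter, mem_univ, true_and]
      by_cases h1 : blockAllOnes b ℓ x j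
      · exact Or.inl h1
      · exact Or.inr (h j h1)
    have hcx : (univ.filter fun j : Fin b => blockAllOnes b ℓ x j).card +
        (univ.filter fun j : Fin b => blockAllZeros b ℓ x j).card = b := by
      rw [← Finset.card_union_of_disjoint (blocks_disjoint b ℓ hℓ1 x), huniv, card_univ,
        Fintype.card_fin]
    have hsx : oneRoyalRoad b ℓ x + zeroRoyalRoad b ℓ x = ℓ * b := by
      rw [oneRoyalRoad, zeroRoyalRoad, ← Nat.mul_add, hcx]
    have hsy := sum_le b ℓ hℓ1 y
    obtain ⟨h1, h2, h3⟩ := hdom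
    omega
  obtain ⟨j, hj1, hj0⟩ := hmix
  simp only [blockAllOnes] at hj1
  simp only [blockAllZeros] at hj0
  push_neg at hj1 hj0
  obtain ⟨iF, hiFj, hiF⟩ := hj1
  obtain ⟨iT, hiTj, hiT⟩ := hj0
  simp only [ne_eq, Bool.not_eq_true] at hiF
  simp only [ne_eq, Bool.not_eq_false] at hiT
  have hZpos : 0 < (univ.filter fun i : Fin (b * ℓ) =>
      (i : ℕ) / ℓ = (j : ℕ) ∧ x i = false).card :=
    Finset.card_pos.mpr ⟨iF, by simp [hiFj, hiF]⟩
  have hOpos : 0 < (univ.filter fun i : Fin (b * ℓ) =>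
      (i : ℕ) / ℓ = (j : ℕ) ∧ x i = true).card :=
    Finset.card_pos.mpr ⟨iT, by simp [hiTj, hiT]⟩
  have hcards := block_card_le b ℓ hℓ1 x j
  rcases (by omega : (univ.filter fun i : Fin (b * ℓ) =>
      (i : ℕ) / ℓ = (j : ℕ) ∧ x i = false).card = 1 ∨
      (univ.filter fun i : Fin (b * ℓ) => (i : ℕ) / ℓ = (j : ℕ) ∧ x i = true).card = 1)
    with hc | hc
  · obtain ⟨i0, hZ⟩ := Finset.card_eq_one.mp hc
    have hi0 : i0 ∈ (univ.filter fun i : Fin (b * ℓ) =>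
        (i : ℕ) / ℓ = (j : ℕ) ∧ x i = false) := hZ ▸ Finset.mem_singleton_self i0
    simp only [mem_filter, mem_univ, true_and] at hi0
    have huniq : ∀ i : Fin (b * ℓ), (i : ℕ) / ℓ = (j : ℕ) → x i = false → i = i0 := by
      intro i hij hxi
      have : i ∈ (univ.filter fun i : Fin (b * ℓ) =>
          (i : ℕ) / ℓ = (j : ℕ) ∧ x i = false) := by simp [hij, hxi]
      rw [hZ, Finset.mem_singleton] at this
      exact this
    exact ⟨Function.update x i0 true, hd_update x i0 true (by simp [hi0.2]),
      flipA b ℓ hℓ1 x j i0 hi0.1 hi0.2 huniq iT hiTj hiT⟩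
  · obtain ⟨i0, hZ⟩ := Finset.card_eq_one.mp hc
    have hi0 : i0 ∈ (univ.filter fun i : Fin (b * ℓ) =>
        (i : ℕ) / ℓ = (j : ℕ) ∧ x i = true) := hZ ▸ Finset.mem_singleton_self i0
    simp only [mem_filter, mem_univ, true_and] at hi0
    have huniq : ∀ i : Fin (b * ℓ), (i : ℕ) / ℓ = (j : ℕ) → x i = true → i = i0 := by
      intro i hij hxi
      have : i ∈ (univ.filter fun i : Fin (b * ℓ) =>
          (i : ℕ) / ℓ = (j : ℕ) ∧ x i = true) := by simp [hij, hxi]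
      rw [hZ, Finset.mem_singleton] at this
      exact this
    exact ⟨Function.update x i0 false, hd_update x i0 false (by simp [hi0.2]),
      flipB b ℓ hℓ1 x j i0 hi0.1 hi0.2 huniq iF hiFj hiF⟩
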